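/- Let d > 1 and let S(w) = -log z₊(w) - a·log w with z₊(w) = ((4d - w - 1/w) + √((4d - w - 1/w)² - 4))/2 and 0 ≤ a ≤ 1. As a ranges over [0,1], consider the parametric curve γ(a) = (-1/S(w₊(a)), -a/S(w₊(a))), where w₊(a) is the larger critical point of S. Its dual curve (with the standard duality (x,y) ↦ (y'/Q, -x'/Q), Q = y x' - x y') is the curve a ↦ (-log z₊(w₊(a)), -log w₊(a)); in particular, writing S = S(w₊(a)) and S_a = dS/da, one has S_a = -log(w₊(a)) and Q(a) = -1/S². -/

import Mathlib

theorem stmt18 (d : ℝ) (hd : 1 < d)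
    (zp wp : ℝ → ℝ)
    (hzp : ∀ w : ℝ, zp w = ((4 * d - w - w⁻¹) + Real.sqrt ((4 * d - w - w⁻¹) ^ 2 - 4)) / 2)
    (hwpdiff : Differentiable ℝ wp)
    (hzpdiff : ∀ a : ℝ, DifferentiableAt ℝ zp (wp a))
    (hwp1 : ∀ a ∈ Set.Icc (0 : ℝ) 1, 1 ≤ wp a)
    (hcrit : ∀ a ∈ Set.Icc (0 : ℝ) 1,
      deriv (fun w => -Real.log (zp w) - a * Real.log w) (wp a) = 0)
    (S : ℝ → ℝ)
    (hS : ∀ a : ℝ, S a = -Real.log (zp (wp a)) - a * Real.log (wp a))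
    (hSneg : ∀ a ∈ Set.Icc (0 : ℝ) 1, S a < 0)
    (a : ℝ) (ha : a ∈ Set.Ioo (0 : ℝ) 1) :
    deriv S a = -Real.log (wp a) ∧
    (-a / S a) * deriv (fun t => -1 / S t) a - (-1 / S a) * deriv (fun t => -t / S t) a
      = -1 / (S a) ^ 2 ∧
    deriv (fun t => -t / S t) a / (-1 / (S a) ^ 2) = -Real.log (zp (wp a)) ∧
    -(deriv (fun t => -1 / S t) a) / (-1 / (S a) ^ 2) = -Real.log (wp a) := by
  have haI : a ∈ Set.Icc (0 : ℝ) 1 := ⟨ha.1.le, ha.2.le⟩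
  have hw1 : 1 ≤ wp a := hwp1 a haI
  have hw0 : (0 : ℝ) < wp a := by linarith
  have hs0 : S a ≠ 0 := ne_of_lt (hSneg a haI)
  -- the key derivative computation
  have key : HasDerivAt S (-Real.log (wp a)) a := by
    have hfun : S = fun t => -Real.log (zp (wp t)) - t * Real.log (wp t) := funext hS
    by_cases hz : zp (wp a) = 0
    · -- degenerate case : zp ∘ wp vanishes identically near a
      have hzw := hzp (wp a)
      rw [hz] at hzw
      have hsq : Real.sqrt ((4 * d - wp a - (wp a)⁻¹) ^ 2 - 4) = -(4 * d - wp a - (wp a)⁻¹) := by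
        linarith
      have hT4 : (4 * d - wp a - (wp a)⁻¹) ^ 2 - 4 < 0 := by
        by_contra h
        push_neg at h
        have h2 := Real.sq_sqrt h
        rw [hsq] at h2
        nlinarith
      have hT0 : 4 * d - wp a - (wp a)⁻¹ = 0 := by
        have h2 : Real.sqrt ((4 * d - wp a - (wp a)⁻¹) ^ 2 - 4) = 0 :=
          Real.sqrt_eq_zero_of_nonpos hT4.le
        linarith [hsq, h2]
      have hinv1 : (wp a)⁻¹ ≤ 1 := inv_le_one_of_one_le₀ hw1
      have hw3 : 3 < wp a := by linarith
      -- continuity facts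
      have hcw : ContinuousAt wp a := (hwpdiff a).continuousAt
      have hcu : ContinuousAt (fun t => 4 * d - wp t - (wp t)⁻¹) a :=
        (continuousAt_const.sub hcw).sub (hcw.inv₀ (ne_of_gt hw0))
      set M : ℝ := wp a + 1 with hM
      have hM0 : (0 : ℝ) < M := by linarith
      have hε : (0 : ℝ) < min 2 (2 / M) := by positivity
      have htu : Filter.Tendsto (fun t => |4 * d - wp t - (wp t)⁻¹|) (nhds a) (nhds 0) := by
        have := hcu.tendsto
        rw [hT0] at this
        simpa using this.abs
      have hev1 : ∀ᶠ t in nhds a, |4 * d - wp t - (wp t)⁻¹| < min 2 (2 / M) :=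
        htu.eventually_lt_const hε
      have hev2 : ∀ᶠ t in nhds a, wp t < M :=
        hcw.tendsto.eventually_lt_const (by linarith)
      have hev3 : ∀ᶠ t in nhds a, t ∈ Set.Ioo (0 : ℝ) 1 := isOpen_Ioo.mem_nhds ha
      have hevS : S =ᶠ[nhds a] fun t => -t * Real.log (wp a) := by
        filter_upwards [hev1, hev2, hev3] with t h1 h2 h3
        have ht01 : t ∈ Set.Icc (0 : ℝ) 1 := ⟨h3.1.le, h3.2.le⟩
        have hwt1 : 1 ≤ wp t := hwp1 t ht01
        have hwt0 : (0 : ℝ) < wp t := by linarith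
        have hu2 : |4 * d - wp t - (wp t)⁻¹| < 2 := lt_of_lt_of_le h1 (min_le_left _ _)
        have huM : |4 * d - wp t - (wp t)⁻¹| < 2 / M := lt_of_lt_of_le h1 (min_le_right _ _)
        have hu4 : (4 * d - wp t - (wp t)⁻¹) ^ 2 - 4 < 0 := by
          have := abs_nonneg (4 * d - wp t - (wp t)⁻¹)
          nlinarith [sq_abs (4 * d - wp t - (wp t)⁻¹)]
        have hzt : zp (wp t) = (4 * d - wp t - (wp t)⁻¹) / 2 := by
          rw [hzp (wp t), Real.sqrt_eq_zero_of_nonpos hu4.le]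
          ring
        have hu0 : 4 * d - wp t - (wp t)⁻¹ = 0 := by
          by_contra hne
          have hSt := hSneg t ht01
          rw [hS t, hzt] at hSt
          have hlogwt : Real.log (wp t) ≤ Real.log M := by
            apply Real.log_le_log hwt0 h2.le
          have hlognn : 0 ≤ Real.log (wp t) := Real.log_nonneg hwt1
          have h1' : -Real.log M < Real.log ((4 * d - wp t - (wp t)⁻¹) / 2) := by
            nlinarith [h3.1.le, h3.2.le]
          have h2' : Real.log ((4 * d - wp t - (wp t)⁻¹) / 2) < -Real.log M := by
            have habs : Real.log ((4 * d - wp t - (wp t)⁻¹) / 2)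
                = Real.log (|4 * d - wp t - (wp t)⁻¹| / 2) := by
              rw [← Real.log_abs, abs_div]
              norm_num
            rw [habs]
            have hlt : |4 * d - wp t - (wp t)⁻¹| / 2 < M⁻¹ := by
              rw [lt_div_iff₀ hM0] at huM
              rw [div_lt_iff₀ (by norm_num : (0:ℝ) < 2)]
              rw [inv_mul_eq_div, lt_div_iff₀ hM0]
              linarith
            have hpos : 0 < |4 * d - wp t - (wp t)⁻¹| / 2 := by
              have := abs_pos.mpr hne
              linarith
            calc Real.log (|4 * d - wp t - (wp t)⁻¹| / 2)
                < Real.log M⁻¹ := Real.log_lt_log hpos hlt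
              _ = -Real.log M := Real.log_inv M
          linarith
        have hwteq : wp t = wp a := by
          have h4dt : wp t + (wp t)⁻¹ = wp a + (wp a)⁻¹ := by linarith
          have e1 : wp t * (wp t)⁻¹ = 1 := mul_inv_cancel₀ (ne_of_gt hwt0)
          have e2 : wp a * (wp a)⁻¹ = 1 := mul_inv_cancel₀ (ne_of_gt hw0)
          have hfac : (wp t - wp a) * (wp t * wp a - 1) = 0 := by
            have h5 : (wp t + (wp t)⁻¹) * (wp t * wp a) = (wp a + (wp a)⁻¹) * (wp t * wp a) := by
              rw [h4dt]
            linear_combination h5 - wp a * e1 + wp t * e2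
          rcases mul_eq_zero.mp hfac with h | h
          · linarith
          · exfalso
            have h6 : (3 : ℝ) < wp t * wp a := by
              calc (3 : ℝ) < wp a := hw3
                _ = 1 * wp a := (one_mul _).symm
                _ ≤ wp t * wp a := mul_le_mul_of_nonneg_right hwt1 hw0.le
            linarith
        rw [hS t, hwteq, hz, Real.log_zero]
        ring
      have hg : HasDerivAt (fun t : ℝ => -t * Real.log (wp a)) (-Real.log (wp a)) a := by
        simpa using ((hasDerivAt_id a).neg.mul_const (Real.log (wp a)))
      exact hg.congr_of_eventuallyEq hevS
    · -- regular case
      have hwd : HasDerivAt wp (deriv wp a) a := (hwpdiff a).hasDerivAt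
      have hzd : HasDerivAt zp (deriv zp (wp a)) (wp a) := (hzpdiff a).hasDerivAt
      have hlogw : HasDerivAt (fun w : ℝ => Real.log w) (wp a)⁻¹ (wp a) :=
        Real.hasDerivAt_log (ne_of_gt hw0)
      have hf : HasDerivAt (fun w => -Real.log (zp w) - a * Real.log w)
          (-(deriv zp (wp a) / zp (wp a)) - a * (wp a)⁻¹) (wp a) :=
        (hzd.log hz).neg.sub (hlogw.const_mul a)
      have hc0 : -(deriv zp (wp a) / zp (wp a)) - a * (wp a)⁻¹ = 0 := by
        rw [← hf.deriv]
        exact hcrit a haI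
      have h1 : HasDerivAt (fun t => Real.log (zp (wp t)))
          (deriv zp (wp a) * deriv wp a / zp (wp a)) a := (hzd.comp a hwd).log hz
      have h2 : HasDerivAt (fun t => Real.log (wp t)) (deriv wp a / wp a) a :=
        hwd.log (ne_of_gt hw0)
      have hScomp : HasDerivAt (fun t => -Real.log (zp (wp t)) - t * Real.log (wp t))
          (-(deriv zp (wp a) * deriv wp a / zp (wp a))
            - (1 * Real.log (wp a) + a * (deriv wp a / wp a))) a :=
        h1.neg.sub ((hasDerivAt_id a).mul h2)
      have hkey1 : -(deriv zp (wp a) * deriv wp a / zp (wp a))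
          - (1 * Real.log (wp a) + a * (deriv wp a / wp a)) = -Real.log (wp a) := by
        have hq : deriv zp (wp a) / zp (wp a) = -(a * (wp a)⁻¹) := by linarith
        have hr : deriv zp (wp a) * deriv wp a / zp (wp a)
            = (deriv zp (wp a) / zp (wp a)) * deriv wp a := by ring
        rw [hr, hq]
        field_simp
        ring
      rw [hfun, ← hkey1]
      exact hScomp
  -- derivatives of the two coordinate functions
  have hA : HasDerivAt (fun t => -1 / S t)
      ((0 * S a - (-1) * (-Real.log (wp a))) / S a ^ 2) a :=
    (hasDerivAt_const a (-1 : ℝ)).div key hs0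
  have hB : HasDerivAt (fun t => -t / S t)
      ((-1 * S a - (-a) * (-Real.log (wp a))) / S a ^ 2) a :=
    ((hasDerivAt_id a).neg).div key hs0
  have hL : Real.log (zp (wp a)) = -S a - a * Real.log (wp a) := by
    rw [hS a]; ring
  refine ⟨key.deriv, ?_, ?_, ?_⟩
  · rw [hA.deriv, hB.deriv]
    field_simp
    ring
  · rw [hB.deriv, hL]
    field_simp
  · rw [hA.deriv]
    field_simp
    ring
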